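/- Let λ∈(0,1) and suppose r(ω)=λ for all ω. Let p≥1 and α₀,…,α_p∈ℝ satisfy ∑_{k=0}^{p} α_k λ^{p−k}=0. Let g∈L¹(P) and define b(ω)=∑_{k=0}^{p} α_k g(T^kω). Then P-almost everywhere, X(ω)=∑_{n=0}^{p−1} (∑_{k=0}^{n} α_k λ^{n−k}) g(T^nω). In particular, if g has countable range, then P_X is purely atomic. -/

import Mathlib

open MeasureTheory Filter Topology

/-- A.e. summability from summability of lintegrals of norms. -/
lemma ae_summable_of_lintegral_tsum_ne_top {Ω : Type*} [MeasurableSpace Ω] (P : Measure Ω)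
    (f : ℕ → Ω → ℝ) (hf : ∀ i, Measurable (f i))
    (h : ∑' i, ∫⁻ ω, ‖f i ω‖₊ ∂P ≠ ⊤) :
    ∀ᵐ ω ∂P, Summable fun n => f n ω := by
  have hmeas : ∀ i, AEMeasurable (fun ω => (‖f i ω‖₊ : ENNReal)) P :=
    fun i => ((hf i).nnnorm.coe_nnreal_ennreal).aemeasurable
  rw [← lintegral_tsum hmeas] at h
  filter_upwards [ae_lt_top' (AEMeasurable.ennreal_tsum hmeas) h] with ω hω
  have h1 : Summable fun n => (‖f n ω‖₊ : ℝ) := by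
    rw [← ENNReal.tsum_coe_ne_top_iff_summable_coe]
    exact hω.ne
  exact Summable.of_norm (by simpa [coe_nnnorm] using h1)

set_option maxHeartbeats 1000000 in
/-- If `r ≡ λ ∈ (0,1)` and `b = ∑_{k=0}^p α_k · g ∘ T^k` where `∑_{k=0}^p α_k λ^{p−k} = 0`,
then `X(ω) = ∑_{n=0}^{p−1} (∑_{k=0}^n α_k λ^{n−k}) g(T^n ω)` almost everywhere; in particular,
if `g` has countable range then the law of `X` is purely atomic. -/
theorem algebraic_relation_gives_atomic_law
    {Ω : Type*} [MeasurableSpace Ω] (P : Measure Ω) [IsProbabilityMeasure P]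
    (T : Ω → Ω) (hT : Ergodic T P)
    (lam : ℝ) (hlam : lam ∈ Set.Ioo (0 : ℝ) 1)
    (p : ℕ) (hp : 1 ≤ p) (a : ℕ → ℝ)
    (hrel : ∑ k ∈ Finset.range (p + 1), a k * lam ^ (p - k) = 0)
    (g : Ω → ℝ) (hg : Measurable g) (hgInt : Integrable g P)
    (b : Ω → ℝ) (hb : ∀ ω, b ω = ∑ k ∈ Finset.range (p + 1), a k * g (T^[k] ω))
    (X : Ω → ℝ) (hX : Measurable X)
    (hXsum : ∀ᵐ ω ∂P, HasSum (fun n : ℕ => lam ^ n * b (T^[n] ω)) (X ω)) :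
    (∀ᵐ ω ∂P, X ω = ∑ n ∈ Finset.range p,
        (∑ k ∈ Finset.range (n + 1), a k * lam ^ (n - k)) * g (T^[n] ω))
    ∧ (Set.Countable (Set.range g) →
        ∃ s : Set ℝ, s.Countable ∧ P.map X s = 1) := by
  obtain ⟨hl0, hl1⟩ := hlam
  have hlam0 : lam ≠ 0 := ne_of_gt hl0
  have MP : MeasurePreserving T P P := hT.toMeasurePreserving
  have hTm : Measurable T := MP.measurable
  have hGm : ∀ i : ℕ, Measurable fun ω => lam ^ i * g (T^[i] ω) :=
    fun i => (hg.comp (hTm.iterate i)).const_mul _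
  -- a.e. absolute summability of the geometric series of g
  have hsummable : ∀ᵐ ω ∂P, Summable fun m : ℕ => lam ^ m * g (T^[m] ω) := by
    apply ae_summable_of_lintegral_tsum_ne_top P _ hGm
    have hcalc : ∀ i : ℕ, ∫⁻ ω, ‖lam ^ i * g (T^[i] ω)‖₊ ∂P
        = (‖lam‖₊ : ENNReal) ^ i * ∫⁻ ω, ‖g ω‖₊ ∂P := by
      intro i
      have : ∀ ω, (‖lam ^ i * g (T^[i] ω)‖₊ : ENNReal)
          = (‖lam‖₊ : ENNReal) ^ i * (‖g (T^[i] ω)‖₊ : ENNReal) := by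
        intro ω
        rw [nnnorm_mul, nnnorm_pow, ENNReal.coe_mul, ENNReal.coe_pow]
      simp_rw [this]
      have hm : Measurable fun ω => ((‖g (T^[i] ω)‖₊ : ENNReal)) :=
        (hg.comp (hTm.iterate i)).nnnorm.coe_nnreal_ennreal
      rw [lintegral_const_mul _ hm]
      congr 1
      exact (MP.iterate i).lintegral_comp hg.nnnorm.coe_nnreal_ennreal
    simp_rw [hcalc]
    rw [ENNReal.tsum_mul_right]
    apply ENNReal.mul_ne_top
    · rw [ENNReal.tsum_geometric]
      apply ENNReal.inv_ne_top.mpr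
      have hlt : (‖lam‖₊ : ENNReal) < 1 := by
        rw [← ENNReal.coe_one, ENNReal.coe_lt_coe, ← NNReal.coe_lt_coe]
        simpa [abs_of_pos hl0] using hl1
      simp [tsub_eq_zero_iff_le, not_le.mpr hlt]
    · exact hgInt.2.ne
  -- the key a.e. identity
  have main : ∀ᵐ ω ∂P, X ω = ∑ n ∈ Finset.range p,
      (∑ k ∈ Finset.range (n + 1), a k * lam ^ (n - k)) * g (T^[n] ω) := by
    filter_upwards [hXsum, hsummable] with ω hXω hSω
    set G : ℕ → ℝ := fun m => lam ^ m * g (T^[m] ω) with hGdef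
    set c : ℕ → ℝ := fun k => a k * lam⁻¹ ^ k with hcdef
    set L : ℝ := ∑' m, G m with hLdef
    set F : ℕ → ℝ := fun N => ∑ m ∈ Finset.range N, G m with hFdef
    have hFlim : Tendsto F atTop (𝓝 L) := hSω.hasSum.tendsto_sum_nat
    have hpowinv : ∀ k n : ℕ, lam⁻¹ ^ k * lam ^ (k + n) = lam ^ n := by
      intro k n
      rw [pow_add, inv_pow, inv_mul_cancel_left₀ (pow_ne_zero k hlam0)]
    -- partial sums identity
    have hpartial : ∀ N : ℕ, ∑ n ∈ Finset.range N, lam ^ n * b (T^[n] ω)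
        = ∑ k ∈ Finset.range (p + 1), c k * (F (k + N) - F k) := by
      intro N
      have hbn : ∀ n, lam ^ n * b (T^[n] ω)
          = ∑ k ∈ Finset.range (p + 1), lam ^ n * (a k * g (T^[k + n] ω)) := by
        intro n
        rw [hb, Finset.mul_sum]
        refine Finset.sum_congr rfl fun k _ => ?_
        rw [← Function.iterate_add_apply]
      simp_rw [hbn]
      rw [Finset.sum_comm]
      refine Finset.sum_congr rfl fun k _ => ?_
      have hspan : F (k + N) - F k = ∑ i ∈ Finset.range N, G (k + i) := by
        rw [hFdef]
        rw [← Finset.sum_Ico_eq_sub _ (Nat.le_add_right k N),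
          Finset.sum_Ico_eq_sum_range]
        simp
      rw [hspan, Finset.mul_sum]
      refine Finset.sum_congr rfl fun i _ => ?_
      rw [hcdef, hGdef]
      simp only []
      calc lam ^ i * (a k * g (T^[k + i] ω))
          = a k * (lam⁻¹ ^ k * lam ^ (k + i)) * g (T^[k + i] ω) := by
            rw [hpowinv k i]; ring
        _ = a k * lam⁻¹ ^ k * (lam ^ (k + i) * g (T^[k + i] ω)) := by ring
    -- limits
    have hlimit : Tendsto (fun N => ∑ n ∈ Finset.range N, lam ^ n * b (T^[n] ω)) atTop
        (𝓝 (∑ k ∈ Finset.range (p + 1), c k * (L - F k))) := by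
      simp_rw [hpartial]
      refine tendsto_finset_sum _ fun k _ => Tendsto.const_mul _ ?_
      refine Tendsto.sub_const ?_ _
      refine hFlim.comp ?_
      simpa [add_comm] using tendsto_add_atTop_nat k
    have hXeq : X ω = ∑ k ∈ Finset.range (p + 1), c k * (L - F k) :=
      tendsto_nhds_unique hXω.tendsto_sum_nat hlimit
    -- sum of coefficients vanishes
    have hc0 : ∑ k ∈ Finset.range (p + 1), c k = 0 := by
      have hck : ∀ k ∈ Finset.range (p + 1), c k = lam⁻¹ ^ p * (a k * lam ^ (p - k)) := by
        intro k hk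
        have hk' : k ≤ p := Nat.lt_succ_iff.mp (Finset.mem_range.mp hk)
        rw [hcdef]
        simp only []
        rw [pow_sub₀ lam hlam0 hk', inv_pow, inv_pow]
        field_simp
      rw [Finset.sum_congr rfl hck, ← Finset.mul_sum, hrel, mul_zero]
    -- swap the double sum
    have hswap : ∑ k ∈ Finset.range (p + 1), c k * F k
        = ∑ m ∈ Finset.range p, (∑ k ∈ Finset.Ico (m + 1) (p + 1), c k) * G m := by
      have hFk : ∀ k ∈ Finset.range (p + 1),
          c k * F k = ∑ m ∈ Finset.range p, (if m < k then c k * G m else 0) := by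
        intro k hk
        have hk' : k ≤ p := Nat.lt_succ_iff.mp (Finset.mem_range.mp hk)
        rw [hFdef]
        simp only []
        rw [Finset.mul_sum, ← Finset.sum_filter]
        congr 1
        ext m
        simp only [Finset.mem_filter, Finset.mem_range]
        omega
      rw [Finset.sum_congr rfl hFk, Finset.sum_comm]
      refine Finset.sum_congr rfl fun m hm => ?_
      rw [Finset.sum_mul]
      rw [← Finset.sum_filter]
      congr 1
      · ext k
        simp only [Finset.mem_filter, Finset.mem_range, Finset.mem_Ico, Nat.succ_le_iff]
        tauto
    have hIco : ∀ m ∈ Finset.range p,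
        ∑ k ∈ Finset.Ico (m + 1) (p + 1), c k = -∑ k ∈ Finset.range (m + 1), c k := by
      intro m hm
      have hm' : m + 1 ≤ p + 1 := Nat.succ_le_succ (Nat.le_of_lt (Finset.mem_range.mp hm))
      rw [Finset.sum_Ico_eq_sub _ hm', hc0, zero_sub]
    -- put everything together
    rw [hXeq]
    have : ∑ k ∈ Finset.range (p + 1), c k * (L - F k)
        = (∑ k ∈ Finset.range (p + 1), c k) * L - ∑ k ∈ Finset.range (p + 1), c k * F k := by
      rw [Finset.sum_mul, ← Finset.sum_sub_distrib]
      refine Finset.sum_congr rfl fun k _ => by ring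
    rw [this, hc0, zero_mul, zero_sub, hswap, ← Finset.sum_neg_distrib]
    refine Finset.sum_congr rfl fun m hm => ?_
    rw [hIco m hm]
    have hcoef : (∑ k ∈ Finset.range (m + 1), c k) * lam ^ m
        = ∑ k ∈ Finset.range (m + 1), a k * lam ^ (m - k) := by
      rw [Finset.sum_mul]
      refine Finset.sum_congr rfl fun k hk => ?_
      have hk' : k ≤ m := Nat.lt_succ_iff.mp (Finset.mem_range.mp hk)
      rw [hcdef]
      simp only []
      rw [pow_sub₀ lam hlam0 hk', inv_pow]
      ring
    rw [hGdef]
    simp only []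
    rw [neg_mul, neg_neg, ← hcoef]
    ring
  refine ⟨main, fun hcount => ?_⟩
  -- countable-range case
  set C : ℕ → ℝ := fun n => ∑ k ∈ Finset.range (n + 1), a k * lam ^ (n - k) with hCdef
  set s : Set ℝ := (fun y : Fin p → ℝ => ∑ m : Fin p, C m.val * y m) ''
    {y : Fin p → ℝ | ∀ m, y m ∈ Set.range g} with hsdef
  have hsc : s.Countable := by
    apply Set.Countable.image
    exact Set.countable_pi fun _ => hcount
  refine ⟨s, hsc, ?_⟩
  rw [Measure.map_apply hX hsc.measurableSet]
  have hmem : ∀ᵐ ω ∂P, ω ∈ X ⁻¹' s := by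
    filter_upwards [main] with ω hω
    refine ⟨fun m => g (T^[m.val] ω), fun m => Set.mem_range_self _, ?_⟩
    show (∑ m : Fin p, C m.val * g (T^[m.val] ω)) = X ω
    rw [Fin.sum_univ_eq_sum_range (fun n => C n * g (T^[n] ω)) p]
    simp only [hCdef]
    exact hω.symm
  rw [← measure_univ (μ := P)]
  exact measure_congr (Filter.eventuallyEq_univ.mpr hmem)
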